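/- Let H be a complex Hilbert space, ι a countable index type, and ψ : ι → H a frame: there exist 0 < m ≤ M < ∞ such that for all f ∈ H the family (|⟨ψ_k, f⟩|²)_k is summable and m‖f‖² ≤ ∑_k |⟨ψ_k, f⟩|² ≤ M‖f‖². Let S : H → H be the bounded frame operator, so that for every f ∈ H the family (⟨ψ_k, f⟩·ψ_k)_k sums (unconditionally in norm) to S f. Then S has a bounded inverse T : H → H (T∘S = S∘T = id), and for every f ∈ H both reconstruction formulas hold with unconditional norm convergence: the family (⟨ψ_k, f⟩·T(ψ_k))_k sums to f, and the family (⟨T(ψ_k), f⟩·ψ_k)_k sums to f. -/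

import Mathlib

open scoped ComplexInnerProductSpace

/-- For a (discrete) frame `ψ : ι → H` with frame operator `S`, the frame
operator has a bounded inverse `T` and one has the two reconstruction formulas, with
unconditional norm convergence: `f = ∑ₖ ⟪ψ k, f⟫ T(ψ k) = ∑ₖ ⟪T(ψ k), f⟫ ψ k`. -/
theorem discrete_frame_reconstruction
    {H : Type*} [NormedAddCommGroup H] [InnerProductSpace ℂ H] [CompleteSpace H]
    {ι : Type*} [Countable ι] (ψ : ι → H) (m M : ℝ) (hm : 0 < m) (hmM : m ≤ M)
    (hframe : ∀ f : H, Summable (fun k => ‖⟪ψ k, f⟫‖ ^ 2) ∧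
      m * ‖f‖ ^ 2 ≤ ∑' k, ‖⟪ψ k, f⟫‖ ^ 2 ∧
      ∑' k, ‖⟪ψ k, f⟫‖ ^ 2 ≤ M * ‖f‖ ^ 2)
    (S : H →L[ℂ] H)
    (hS : ∀ f : H, HasSum (fun k => ⟪ψ k, f⟫ • ψ k) (S f)) :
    ∃ T : H →L[ℂ] H,
      T.comp S = ContinuousLinearMap.id ℂ H ∧
      S.comp T = ContinuousLinearMap.id ℂ H ∧
      ∀ f : H, HasSum (fun k => ⟪ψ k, f⟫ • T (ψ k)) f ∧
        HasSum (fun k => ⟪T (ψ k), f⟫ • ψ k) f := by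
  -- ⟪f, S f⟫ is the (real) tsum of |⟪ψ k, f⟫|²
  have hinner : ∀ f : H, ⟪f, S f⟫ = ((∑' k, ‖⟪ψ k, f⟫‖ ^ 2 : ℝ) : ℂ) := by
    intro f
    have h1 : HasSum (fun k => ⟪f, ⟪ψ k, f⟫ • ψ k⟫) ⟪f, S f⟫ :=
      (hS f).mapL (innerSL ℂ f)
    have h2 : HasSum (fun k => ((‖⟪ψ k, f⟫‖ ^ 2 : ℝ) : ℂ)) ⟪f, S f⟫ := by
      refine h1.congr_fun fun k => ?_
      rw [inner_smul_right, ← inner_conj_symm f (ψ k), RCLike.mul_conj]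
      norm_cast
    have h3 : HasSum (fun k => ((‖⟪ψ k, f⟫‖ ^ 2 : ℝ) : ℂ))
        ((∑' k, ‖⟪ψ k, f⟫‖ ^ 2 : ℝ) : ℂ) :=
      ((hframe f).1.hasSum).mapL Complex.ofRealCLM
    exact h2.unique h3
  -- lower bound ‖S f‖ ≥ m ‖f‖
  have hlow : ∀ f : H, m * ‖f‖ ≤ ‖S f‖ := by
    intro f
    rcases eq_or_ne f 0 with rfl | hf
    · simp
    have h1 : m * ‖f‖ ^ 2 ≤ ‖⟪f, S f⟫‖ := by
      rw [hinner f, Complex.norm_real]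
      refine le_trans (hframe f).2.1 (le_abs_self _)
    have h2 : ‖⟪f, S f⟫‖ ≤ ‖f‖ * ‖S f‖ := norm_inner_le_norm _ _
    have hf' : 0 < ‖f‖ := norm_pos_iff.mpr hf
    nlinarith [h1.trans h2]
  have hanti : AntilipschitzWith (⟨m, hm.le⟩ : NNReal)⁻¹ S := by
    refine ContinuousLinearMap.antilipschitz_of_bound S fun x => ?_
    show ‖x‖ ≤ m⁻¹ * ‖S x‖
    rw [inv_mul_eq_div, le_div_iff₀ hm, mul_comm]
    exact hlow x
  -- symmetry of S
  have hsym : ∀ f g : H, ⟪S f, g⟫ = ⟪f, S g⟫ := by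
    intro f g
    have h1 : HasSum (fun k => ⟪g, ⟪ψ k, f⟫ • ψ k⟫) ⟪g, S f⟫ :=
      (hS f).mapL (innerSL ℂ g)
    have h2 := h1.star
    have h3 : HasSum (fun k => ⟪f, ⟪ψ k, g⟫ • ψ k⟫) ⟪f, S g⟫ :=
      (hS g).mapL (innerSL ℂ f)
    rw [← inner_conj_symm (S f) g]
    refine HasSum.unique ?_ h3
    refine h2.congr_fun fun k => ?_
    simp only [inner_smul_right, star_mul', ← inner_conj_symm (ψ k) f,
      ← inner_conj_symm (ψ k) g]
    simp [mul_comm]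
  -- injectivity and surjectivity
  have hker : S.ker = ⊥ :=
    LinearMap.ker_eq_bot_of_injective hanti.injective
  have hclosed : IsClosed (S.range : Set H) :=
    hanti.isClosed_range S.uniformContinuous
  have : CompleteSpace (S.range) := hclosed.completeSpace_coe
  have hrange : S.range = ⊤ := by
    rw [← Submodule.orthogonal_eq_bot_iff]
    rw [Submodule.eq_bot_iff]
    intro g hg
    have h0 : ⟪S g, g⟫ = 0 := hg (S g) (S.mem_range_self g)
    have h0' : ⟪g, S g⟫ = 0 := by
      rw [← inner_conj_symm, h0, map_zero]
    have := (hframe g).2.1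
    rw [hinner g] at h0'
    have hts : (∑' k, ‖⟪ψ k, g⟫‖ ^ 2 : ℝ) = 0 := by exact_mod_cast h0'
    rw [hts] at this
    have : ‖g‖ ^ 2 ≤ 0 := by nlinarith
    have : ‖g‖ = 0 := by nlinarith [sq_nonneg ‖g‖, norm_nonneg g]
    simpa using this
  let E : H ≃L[ℂ] H := ContinuousLinearEquiv.ofBijective S hker hrange
  have hE : ∀ f, E f = S f := fun f => rfl
  refine ⟨E.symm.toContinuousLinearMap, ?_, ?_, ?_⟩
  · ext f
    show E.symm (S f) = f
    rw [← hE f]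
    exact E.symm_apply_apply f
  · ext f
    show S (E.symm f) = f
    rw [← hE (E.symm f)]
    exact E.apply_symm_apply f
  · intro f
    have hTS : ∀ x, E.symm (S x) = x := fun x => E.symm_apply_apply x
    have hST : ∀ x, S (E.symm x) = x := fun x => E.apply_symm_apply x
    have hTsym : ∀ x y : H, ⟪E.symm x, y⟫ = ⟪x, E.symm y⟫ := by
      intro x y
      calc ⟪E.symm x, y⟫ = ⟪E.symm x, S (E.symm y)⟫ := by rw [hST]
        _ = ⟪S (E.symm x), E.symm y⟫ := (hsym _ _).symm
        _ = ⟪x, E.symm y⟫ := by rw [hST]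
    constructor
    · have := (hS f).mapL E.symm.toContinuousLinearMap
      simp only [ContinuousLinearEquiv.coe_coe, map_smul] at this
      simpa [hTS] using this
    · have := hS (E.symm f)
      rw [hST] at this
      refine this.congr_fun fun k => ?_
      simp only [ContinuousLinearEquiv.coe_coe]
      rw [hTsym]
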